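/- Let θ, θ′, φ, φ′, R₁₁, R₁₂, R₂₁ be real numbers with θ·φ′ − θ′·φ = 1, R₁₁² − R₁₂·R₂₁ = 1, and R₁₂ ≠ 0. Then 2R₁₂·θθ′ + 2R₂₁·φφ′ − 4R₁₁·φθ′ − 2R₁₁ + 2 = −(2/R₁₂)·((R₁₁ + 1)·φ − R₁₂·θ)·(R₁₂·θ′ − (R₁₁ − 1)·φ′). (This is the Appendix factorization (4.22) of the characteristic function F_{0,R′}(z) of the symmetric coupled extension into −2(R₁₂/(sin α sin α′))·F^{(a,(b+a)/2)}_{α,π}(z)·F^{(a,(b+a)/2)}_{α′,π/2}(z) with cot(α) = (R₁₁+1)/R₁₂ and cot(α′) = (R₁₁−1)/R₁₂.) -/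
import Mathlib


/-- Appendix factorization (4.22) of the characteristic function `F_{0,R′}(z)` of the
symmetric coupled extension: with Wronskian normalization `θφ′ − θ′φ = 1` and
`R ∈ SL(2,ℝ)` with equal diagonal entries (`R₁₁² − R₁₂R₂₁ = 1`), `R₁₂ ≠ 0`,
`F_{0,R′}(z) = −(2/R₁₂)((R₁₁+1)φ − R₁₂θ)(R₁₂θ′ − (R₁₁−1)φ′)`. -/
theorem stmt_13 (θ θ' φ φ' R11 R12 R21 : ℝ)
    (hW : θ * φ' - θ' * φ = 1) (hdet : R11 ^ 2 - R12 * R21 = 1) (h12 : R12 ≠ 0) :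
    2 * R12 * (θ * θ') + 2 * R21 * (φ * φ') - 4 * R11 * (φ * θ') - 2 * R11 + 2 =
      -(2 / R12) * ((R11 + 1) * φ - R12 * θ) * (R12 * θ' - (R11 - 1) * φ') := by
  have h21 : R21 = (R11 ^ 2 - 1) / R12 := by field_simp; linarith
  subst h21
  field_simp
  linear_combination (2 * R12 * (R11 - 1)) * hW
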